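/- For b ∈ {1, 2}, the minimum number of vertices of a weighted graph G = (L,H) with L 2-regular, H b-regular, disjoint edge sets, and girth 3 (minimum cycle weight 3, where L-edges weigh 1 and H-edges weigh 2) is exactly 6. -/

import Mathlib

open Classical in
/-- Weight of a walk in `L ⊔ H`: light edges (in `L`) weigh 1, heavy edges weigh 2. -/
noncomputable def wWeight {V : Type*} (L H : SimpleGraph V) {u : V}
    (w : (L ⊔ H).Walk u u) : ℕ :=
  (w.edges.map fun e => if e ∈ L.edgeSet then 1 else 2).sum

/-- `(L,H)` is an `(a,b)`-regular weighted graph of girth `g`. -/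
def IsWGraph {V : Type*} (L H : SimpleGraph V) (a b g : ℕ) : Prop :=
  Disjoint L H ∧
  (∀ v, (L.neighborSet v).ncard = a) ∧
  (∀ v, (H.neighborSet v).ncard = b) ∧
  (∃ (u : V) (w : (L ⊔ H).Walk u u), w.IsCycle ∧ wWeight L H w = g) ∧
  (∀ (u : V) (w : (L ⊔ H).Walk u u), w.IsCycle → g ≤ wWeight L H w)

lemma length_le_wWeight {V : Type*} (L H : SimpleGraph V) {u : V}
    (w : (L ⊔ H).Walk u u) : w.length ≤ wWeight L H w := by
  classical
  have h : ((w.edges.map fun _ => (1:ℕ)).sum : ℕ) ≤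
      (w.edges.map fun e => if e ∈ L.edgeSet then 1 else 2).sum := by
    apply List.sum_le_sum
    intro i _
    split <;> omega
  have h2 : (w.edges.map fun _ => (1:ℕ)).sum = w.length := by
    simp [w.length_edges]
  rw [wWeight]
  omega

/-- Two disjoint triangles `{0,1,2}` and `{3,4,5}`. -/
def L6 : SimpleGraph (Fin 6) where
  Adj x y := x ≠ y ∧ x.val / 3 = y.val / 3
  symm := ⟨by decide⟩
  loopless := ⟨by decide⟩

instance : DecidableRel L6.Adj :=
  fun x y => inferInstanceAs (Decidable (x ≠ y ∧ x.val / 3 = y.val / 3))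

/-- The perfect matching `0-3, 1-4, 2-5`. -/
def H61 : SimpleGraph (Fin 6) where
  Adj x y := x ≠ y ∧ x.val % 3 = y.val % 3
  symm := ⟨by decide⟩
  loopless := ⟨by decide⟩

instance : DecidableRel H61.Adj :=
  fun x y => inferInstanceAs (Decidable (x ≠ y ∧ x.val % 3 = y.val % 3))

/-- A 2-regular bipartite graph between the two triangles of `L6`. -/
def H62 : SimpleGraph (Fin 6) where
  Adj x y := (x.val / 3 = 0 ∧ y.val / 3 = 1 ∧
      (y.val % 3 = x.val % 3 ∨ y.val % 3 = (x.val % 3 + 1) % 3)) ∨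
    (y.val / 3 = 0 ∧ x.val / 3 = 1 ∧
      (x.val % 3 = y.val % 3 ∨ x.val % 3 = (y.val % 3 + 1) % 3))
  symm := ⟨by decide⟩
  loopless := ⟨by decide⟩

instance : DecidableRel H62.Adj :=
  fun x y => inferInstanceAs (Decidable (_ ∨ _))

lemma ncard_nbhd {G : SimpleGraph (Fin 6)} [DecidableRel G.Adj] (v : Fin 6) :
    (G.neighborSet v).ncard = (Finset.univ.filter (fun x => G.Adj v x)).card := by
  rw [show G.neighborSet v = ↑(Finset.univ.filter (fun x => G.Adj v x)) from by ext x; simp]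
  exact Set.ncard_coe_finset _

lemma girth_parts (H : SimpleGraph (Fin 6)) :
    (∃ (u : Fin 6) (w : (L6 ⊔ H).Walk u u), w.IsCycle ∧ wWeight L6 H w = 3) ∧
    (∀ (u : Fin 6) (w : (L6 ⊔ H).Walk u u), w.IsCycle → 3 ≤ wWeight L6 H w) := by
  constructor
  · have h01 : (L6 ⊔ H).Adj 0 1 := Or.inl (by decide)
    have h12 : (L6 ⊔ H).Adj 1 2 := Or.inl (by decide)
    have h20 : (L6 ⊔ H).Adj 2 0 := Or.inl (by decide)
    refine ⟨0, .cons h01 (.cons h12 (.cons h20 .nil)), ?_, ?_⟩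
    · rw [SimpleGraph.Walk.isCycle_def]
      refine ⟨?_, by simp, ?_⟩
      · rw [SimpleGraph.Walk.isTrail_def]
        simp only [SimpleGraph.Walk.edges_cons, SimpleGraph.Walk.edges_nil]
        decide
      · simp only [SimpleGraph.Walk.support_cons, SimpleGraph.Walk.support_nil, List.tail_cons]
        decide
    · have e1 : (s(0,1) : Sym2 (Fin 6)) ∈ L6.edgeSet := by rw [SimpleGraph.mem_edgeSet]; decide
      have e2 : (s(1,2) : Sym2 (Fin 6)) ∈ L6.edgeSet := by rw [SimpleGraph.mem_edgeSet]; decide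
      have e3 : (s(2,0) : Sym2 (Fin 6)) ∈ L6.edgeSet := by rw [SimpleGraph.mem_edgeSet]; decide
      simp [wWeight, e1, e2, e3]
  · intro u w hcyc
    have := length_le_wWeight L6 H w
    have := hcyc.three_le_length
    omega

lemma lower (n b : ℕ) (hb : 1 ≤ b) (L H : SimpleGraph (Fin n))
    (h : IsWGraph L H 2 b 3) : 6 ≤ n := by
  classical
  obtain ⟨hdisj, hL, hH, ⟨u, w, hcyc, hw3⟩, _⟩ := h
  have hlen : w.length = 3 := by
    have h1 := length_le_wWeight L H w
    have h2 := hcyc.three_le_length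
    omega
  cases w with
  | nil => simp at hlen
  | cons h1 w1 =>
  rename_i a
  cases w1 with
  | nil => simp at hlen
  | cons h2 w2 =>
  rename_i c
  cases w2 with
  | nil => simp at hlen
  | cons h3 w3 =>
  rename_i d
  cases w3 with
  | cons h4 w4 => simp [SimpleGraph.Walk.length_cons] at hlen
  | nil =>
  simp only [wWeight, SimpleGraph.Walk.edges_cons, SimpleGraph.Walk.edges_nil,
    List.map_cons, List.map_nil, List.sum_cons, List.sum_nil] at hw3
  split_ifs at hw3 with hA hB hC <;> try omega
  rw [SimpleGraph.mem_edgeSet] at hA hB hC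
  -- triangle u, a, c
  have hua : u ≠ a := hA.ne
  have hac : a ≠ c := hB.ne
  have hcu : c ≠ u := hC.ne
  have nbhd : ∀ x y z : Fin n, L.Adj x y → L.Adj x z → y ≠ z →
      L.neighborSet x = {y, z} := by
    intro x y z hxy hxz hyz
    refine (Set.eq_of_subset_of_ncard_le ?_ ?_ (Set.toFinite _)).symm
    · intro t ht
      rcases ht with rfl | rfl
      · exact hxy
      · exact hxz
    · rw [hL x, Set.ncard_pair hyz]
  have Nu : L.neighborSet u = {a, c} := nbhd u a c hA hC.symm hac
  have Na : L.neighborSet a = {u, c} := nbhd a u c hA.symm hB hcu.symm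
  have Nc : L.neighborSet c = {a, u} := nbhd c a u hB.symm hC hua.symm
  -- an H-neighbor of u
  obtain ⟨v, hv⟩ : (H.neighborSet u).Nonempty :=
    Set.nonempty_of_ncard_ne_zero (by rw [hH u]; omega)
  have hHuv : H.Adj u v := hv
  have hvu : v ≠ u := hHuv.ne'
  have hnotL : ∀ x y : Fin n, L.Adj x y → ¬ H.Adj x y := by
    intro x y hLxy hHxy
    exact hdisj.le_bot ⟨hLxy, hHxy⟩
  have hva : v ≠ a := by rintro rfl; exact hnotL u v hA hHuv
  have hvc : v ≠ c := by rintro rfl; exact hnotL u v hC.symm hHuv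
  -- the L-neighbors of v
  obtain ⟨p, q, hpq, hNv⟩ := Set.ncard_eq_two.mp (hL v)
  have hvp : L.Adj v p := by rw [← SimpleGraph.mem_neighborSet, hNv]; exact Or.inl rfl
  have hvq : L.Adj v q := by rw [← SimpleGraph.mem_neighborSet, hNv]; exact Or.inr rfl
  have fresh : ∀ x : Fin n, L.Adj v x → x ≠ u ∧ x ≠ a ∧ x ≠ c := by
    intro x hx
    refine ⟨?_, ?_, ?_⟩
    · intro hxe
      have : v ∈ L.neighborSet u := by rw [← hxe]; exact hx.symm
      rw [Nu] at this
      rcases this with rfl | rfl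
      · exact hva rfl
      · exact hvc rfl
    · intro hxe
      have : v ∈ L.neighborSet a := by rw [← hxe]; exact hx.symm
      rw [Na] at this
      rcases this with rfl | rfl
      · exact hvu rfl
      · exact hvc rfl
    · intro hxe
      have : v ∈ L.neighborSet c := by rw [← hxe]; exact hx.symm
      rw [Nc] at this
      rcases this with rfl | rfl
      · exact hva rfl
      · exact hvu rfl
  obtain ⟨hpu, hpa, hpc⟩ := fresh p hvp
  obtain ⟨hqu, hqa, hqc⟩ := fresh q hvq
  have hpv : p ≠ v := hvp.ne'
  have hqv : q ≠ v := hvq.ne'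
  -- six distinct vertices
  have hcard : ({u, a, c, v, p, q} : Finset (Fin n)).card = 6 := by
    rw [Finset.card_insert_of_notMem
          (by simp [hua, (hcu.symm : u ≠ c), hvu.symm, hpu.symm, hqu.symm]),
        Finset.card_insert_of_notMem (by simp [hac, hva.symm, hpa.symm, hqa.symm]),
        Finset.card_insert_of_notMem (by simp [hvc.symm, hpc.symm, hqc.symm]),
        Finset.card_insert_of_notMem (by simp [hpv.symm, hqv.symm]),
        Finset.card_insert_of_notMem (by simp [hpq]),
        Finset.card_singleton]
  have := Finset.card_le_univ ({u, a, c, v, p, q} : Finset (Fin n))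
  rw [hcard] at this
  simpa using this

/-- For `b ∈ {1,2}`, the minimum order of a `(2,b)`-regular weighted graph of
girth 3 is exactly 6. -/
theorem stmt_9 (b : ℕ) (hb : b = 1 ∨ b = 2) :
    IsLeast {n : ℕ | ∃ L H : SimpleGraph (Fin n), IsWGraph L H 2 b 3} 6 := by
  constructor
  · rcases hb with rfl | rfl
    · refine ⟨L6, H61, ?_, ?_, ?_, (girth_parts H61).1, (girth_parts H61).2⟩
      · rw [disjoint_iff]
        ext x y
        simp only [SimpleGraph.inf_adj, SimpleGraph.bot_adj, iff_false]
        revert x y; decide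
      · intro v; rw [ncard_nbhd]; fin_cases v <;> decide
      · intro v; rw [ncard_nbhd]; fin_cases v <;> decide
    · refine ⟨L6, H62, ?_, ?_, ?_, (girth_parts H62).1, (girth_parts H62).2⟩
      · rw [disjoint_iff]
        ext x y
        simp only [SimpleGraph.inf_adj, SimpleGraph.bot_adj, iff_false]
        revert x y; decide
      · intro v; rw [ncard_nbhd]; fin_cases v <;> decide
      · intro v; rw [ncard_nbhd]; fin_cases v <;> decide
  · rintro n ⟨L, H, h⟩
    exact lower n b (by omega) L H h
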